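/- Let a, b ∈ A and 0 < λ ∈ ℝ. Then: (i) −λ ≤ a ≤ λ if and only if a² ≤ λ²; (ii) ‖a²‖ = ‖a‖²; (iii) if 0 ≤ a and 0 ≤ b then ‖a − b‖ ≤ max{‖a‖, ‖b‖}; (iv) ‖a∘b‖ ≤ ‖a‖·‖b‖, where a∘b := ½(ab + ba); (v) if aCb then ‖ab‖ ≤ ‖a‖·‖b‖. -/

import Mathlib

/-- A synaptic algebra: a real vector subspace `carrier` of a unital associative
real algebra `R`, containing `1`, equipped with a positive cone `Pos` making it a
partially ordered archimedean real vector space with order unit `1`, and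
satisfying conditions [SA2]–[SA9]. The partial order is `a ≤ b ↔ b - a ∈ Pos`. -/
structure SynapticAlgebra (R : Type*) [Ring R] [Algebra ℝ R] where
  carrier : Set R
  one_mem : (1 : R) ∈ carrier
  add_mem : ∀ {a b : R}, a ∈ carrier → b ∈ carrier → a + b ∈ carrier
  smul_mem : ∀ (t : ℝ) {a : R}, a ∈ carrier → t • a ∈ carrier
  neg_mem : ∀ {a : R}, a ∈ carrier → -a ∈ carrier
  Pos : Set R
  pos_subset : Pos ⊆ carrier
  pos_add : ∀ {a b : R}, a ∈ Pos → b ∈ Pos → a + b ∈ Pos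
  pos_smul : ∀ {t : ℝ}, 0 ≤ t → ∀ {a : R}, a ∈ Pos → t • a ∈ Pos
  pos_antisymm : ∀ {a : R}, a ∈ Pos → -a ∈ Pos → a = 0
  arch : ∀ {a b : R}, a ∈ carrier → b ∈ carrier →
    (∀ n : ℕ, b - (n : ℝ) • a ∈ Pos) → -a ∈ Pos
  one_pos : (1 : R) ∈ Pos
  orderUnit : ∀ {a : R}, a ∈ carrier → ∃ n : ℕ, (n : ℝ) • (1 : R) - a ∈ Pos
  SA2 : ∀ {a b : R}, a ∈ Pos → b ∈ Pos → a * b = b * a → a * b ∈ Pos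
  SA3 : ∀ {a : R}, a ∈ carrier → a * a ∈ Pos
  SA4 : ∀ {a b : R}, a ∈ Pos → b ∈ Pos → a * b * a ∈ Pos
  SA5 : ∀ {a b : R}, a ∈ carrier → b ∈ Pos → a * b * a = 0 → a * b = 0 ∧ b * a = 0
  SA6 : ∀ {a : R}, a ∈ Pos →
    ∃ b : R, b ∈ Pos ∧ (∀ c ∈ carrier, c * a = a * c → c * b = b * c) ∧ b * b = a
  SA7 : ∀ {a : R}, a ∈ carrier →
    ∃ p : R, p ∈ carrier ∧ p * p = p ∧ ∀ b ∈ carrier, (a * b = 0 ↔ p * b = 0)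
  SA8 : ∀ {a : R}, a ∈ carrier → a - 1 ∈ Pos → ∃ b ∈ carrier, a * b = 1 ∧ b * a = 1
  SA9 : ∀ {a b : R}, a ∈ carrier → b ∈ carrier → ∀ s : ℕ → R,
    (∀ n, s n ∈ carrier) → (∀ n, s (n + 1) - s n ∈ Pos) →
    (∀ m n, s m * s n = s n * s m) → (∀ n, s n * b = b * s n) →
    (∀ ε : ℝ, 0 < ε →
      ∃ N : ℕ, ∀ n ≥ N, (a - s n) - (-ε) • (1 : R) ∈ Pos ∧ ε • (1 : R) - (a - s n) ∈ Pos) →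
    a * b = b * a

namespace SynapticAlgebra

variable {R : Type*} [Ring R] [Algebra ℝ R]

/-- The partial order of the synaptic algebra: `a ≤ b` iff `b - a` is in the positive cone. -/
def le (S : SynapticAlgebra R) (a b : R) : Prop := b - a ∈ S.Pos

/-- The identification of a real number `t` with the element `t·1` of the algebra. -/
def scal (_ : SynapticAlgebra R) (t : ℝ) : R := t • (1 : R)

/-- The order-unit norm: `‖a‖ = inf {t : ℝ | 0 < t ∧ -t·1 ≤ a ≤ t·1}`. -/
noncomputable def nrm (S : SynapticAlgebra R) (a : R) : ℝ :=
  sInf {t : ℝ | 0 < t ∧ S.le (S.scal (-t)) a ∧ S.le a (S.scal t)}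

/-- `p` is a projection: an idempotent element of the algebra. -/
def IsProj (S : SynapticAlgebra R) (p : R) : Prop := p ∈ S.carrier ∧ p * p = p

/-- `e` is an effect: an element with `0 ≤ e ≤ 1`. -/
def IsEff (S : SynapticAlgebra R) (e : R) : Prop := e ∈ S.carrier ∧ S.le 0 e ∧ S.le e 1

/-- `b ∈ CC(a)`: `b` is in the algebra and commutes with every element of the
algebra that commutes with `a` (the double commutant of `a`). -/
def inCC (S : SynapticAlgebra R) (a b : R) : Prop :=
  b ∈ S.carrier ∧ ∀ c ∈ S.carrier, c * a = a * c → c * b = b * c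

/-- The square root of a positive element (chosen via [SA6]; it is unique). -/
noncomputable def sqrt (S : SynapticAlgebra R) (a : R) : R :=
  @dite R (a ∈ S.Pos) (Classical.dec _) (fun h => Classical.choose (S.SA6 h)) (fun _ => 0)

/-- The carrier projection `a°` of `a` (chosen via [SA7]; it is unique):
the projection `p` such that for all `b` in the algebra, `ab = 0 ↔ pb = 0`. -/
noncomputable def carr (S : SynapticAlgebra R) (a : R) : R :=
  @dite R (a ∈ S.carrier) (Classical.dec _) (fun h => Classical.choose (S.SA7 h)) (fun _ => 0)

/-- Absolute value: `|a| := (a²)^{1/2}`. -/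
noncomputable def abs (S : SynapticAlgebra R) (a : R) : R := S.sqrt (a * a)

/-- Positive part: `a⁺ := ½(|a| + a)`. -/
noncomputable def posPart (S : SynapticAlgebra R) (a : R) : R := (1/2 : ℝ) • (S.abs a + a)

/-- Negative part: `a⁻ := ½(|a| − a)`. -/
noncomputable def negPart (S : SynapticAlgebra R) (a : R) : R := (1/2 : ℝ) • (S.abs a - a)

/-- Signum: `sgn(a) := (a⁺)° − (a⁻)°`. -/
noncomputable def sgn (S : SynapticAlgebra R) (a : R) : R :=
  S.carr (S.posPart a) - S.carr (S.negPart a)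

/-- The Sasaki mapping: `φ_a(b) := (aba)°`. -/
noncomputable def sas (S : SynapticAlgebra R) (a b : R) : R := S.carr (a * b * a)

/-- `m` is the infimum of the projections `p` and `q` in the poset `P` of projections. -/
def IsMeet (S : SynapticAlgebra R) (p q m : R) : Prop :=
  S.IsProj m ∧ S.le m p ∧ S.le m q ∧ ∀ r, S.IsProj r → S.le r p → S.le r q → S.le r m

/-- `j` is the supremum of the projections `p` and `q` in the poset `P` of projections. -/
def IsJoin (S : SynapticAlgebra R) (p q j : R) : Prop :=
  S.IsProj j ∧ S.le p j ∧ S.le q j ∧ ∀ r, S.IsProj r → S.le p r → S.le q r → S.le j r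

end SynapticAlgebra

open SynapticAlgebra Filter

variable {R : Type*} [Ring R] [Algebra ℝ R]

namespace SynapticAlgebra

variable (S : SynapticAlgebra R)

lemma smul_one_pos' {t : ℝ} (ht : 0 ≤ t) : t • (1 : R) ∈ S.Pos := S.pos_smul ht S.one_pos

lemma le_trans'' {x y z : R} (h1 : S.le x y) (h2 : S.le y z) : S.le x z := by
  have h3 := S.pos_add h2 h1
  rwa [show z - y + (y - x) = z - x by abel] at h3

/-- The defining set for the order-unit norm. -/
def nset (a : R) : Set ℝ := {t : ℝ | 0 < t ∧ S.le (S.scal (-t)) a ∧ S.le a (S.scal t)}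

lemma nrm_def (a : R) : S.nrm a = sInf (S.nset a) := rfl

lemma nset_bdd (a : R) : BddBelow (S.nset a) := ⟨0, fun _ ht => ht.1.le⟩

lemma nset_upward {a : R} {t s : ℝ} (ht : t ∈ S.nset a) (hts : t ≤ s) : s ∈ S.nset a := by
  refine ⟨lt_of_lt_of_le ht.1 hts, S.le_trans'' ?_ ht.2.1, S.le_trans'' ht.2.2 ?_⟩
  · show S.scal (-t) - S.scal (-s) ∈ S.Pos
    have h := S.smul_one_pos' (sub_nonneg.2 hts)
    unfold scal
    rwa [show (-t) • (1:R) - (-s) • (1:R) = (s - t) • (1:R) by module]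
  · show S.scal s - S.scal t ∈ S.Pos
    have h := S.smul_one_pos' (sub_nonneg.2 hts)
    unfold scal
    rwa [show s • (1:R) - t • (1:R) = (s - t) • (1:R) by module]

lemma nset_nonempty {a : R} (ha : a ∈ S.carrier) : (S.nset a).Nonempty := by
  obtain ⟨n, hn⟩ := S.orderUnit ha
  obtain ⟨m, hm⟩ := S.orderUnit (S.neg_mem ha)
  refine ⟨(n : ℝ) + (m : ℝ) + 1, by positivity, ?_, ?_⟩
  · show a - S.scal (-((n:ℝ) + m + 1)) ∈ S.Pos
    have h := S.pos_add hm (S.smul_one_pos' (show (0:ℝ) ≤ (n:ℝ) + 1 by positivity))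
    unfold scal
    rwa [show (m:ℝ) • (1:R) - (-a) + ((n:ℝ)+1) • (1:R)
        = a - (-((n:ℝ) + m + 1)) • (1:R) by module] at h
  · show S.scal ((n:ℝ) + m + 1) - a ∈ S.Pos
    have h := S.pos_add hn (S.smul_one_pos' (show (0:ℝ) ≤ (m:ℝ) + 1 by positivity))
    unfold scal
    rwa [show (n:ℝ) • (1:R) - a + ((m:ℝ)+1) • (1:R)
        = ((n:ℝ) + m + 1) • (1:R) - a by module] at h

lemma nrm_le_of_mem {a : R} {t : ℝ} (h : t ∈ S.nset a) : S.nrm a ≤ t :=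
  csInf_le (S.nset_bdd a) h

lemma nrm_nonneg' {a : R} (ha : a ∈ S.carrier) : 0 ≤ S.nrm a :=
  le_csInf (S.nset_nonempty ha) fun _ ht => ht.1.le

lemma mem_of_nrm_lt {a : R} {t : ℝ} (ha : a ∈ S.carrier) (h : S.nrm a < t) :
    t ∈ S.nset a := by
  obtain ⟨s, hs, hst⟩ := exists_lt_of_csInf_lt (S.nset_nonempty ha) h
  exact S.nset_upward hs hst.le

/-- (i), forward direction. -/
lemma sq_le_of_le {a : R} {l : ℝ} (hl : 0 < l)
    (h1 : S.le (S.scal (-l)) a) (h2 : S.le a (S.scal l)) : S.le (a * a) (S.scal (l * l)) := by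
  have hx : l • (1:R) - a ∈ S.Pos := h2
  have hy : l • (1:R) + a ∈ S.Pos := by
    have h1' : a - S.scal (-l) ∈ S.Pos := h1
    unfold scal at h1'
    rwa [show a - (-l) • (1:R) = l • (1:R) + a by module] at h1'
  have hcomm : (l • (1:R) - a) * (l • (1:R) + a) = (l • (1:R) + a) * (l • (1:R) - a) := by
    simp only [sub_mul, mul_add, add_mul, mul_sub, smul_mul_assoc, mul_smul_comm,
      one_mul, mul_one, smul_smul]
    module
  have hp := S.SA2 hx hy hcomm
  show S.scal (l * l) - a * a ∈ S.Pos
  unfold scal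
  have heq : (l • (1:R) - a) * (l • (1:R) + a) = (l * l) • (1:R) - a * a := by
    simp only [sub_mul, mul_add, smul_mul_assoc, mul_smul_comm, one_mul, mul_one, smul_smul]
    module
  rwa [heq] at hp

/-- (i), backward direction. -/
lemma le_of_sq_le {a : R} (ha : a ∈ S.carrier) {l : ℝ} (hl : 0 < l)
    (h : S.le (a * a) (S.scal (l * l))) : S.le (S.scal (-l)) a ∧ S.le a (S.scal l) := by
  have h' : (l * l) • (1:R) - a * a ∈ S.Pos := h
  constructor
  · have hmem : l • (1:R) + a ∈ S.carrier := S.add_mem (S.smul_mem l S.one_mem) ha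
    have hsq := S.SA3 hmem
    have hsum := S.pos_add hsq h'
    have heq : (l • (1:R) + a) * (l • (1:R) + a) + ((l * l) • (1:R) - a * a)
        = (2 * l) • (l • (1:R) + a) := by
      simp only [add_mul, mul_add, smul_mul_assoc, mul_smul_comm, one_mul, mul_one,
        smul_smul, smul_add]
      module
    rw [heq] at hsum
    have h2 := S.pos_smul (show (0:ℝ) ≤ (2 * l)⁻¹ by positivity) hsum
    rw [smul_smul, inv_mul_cancel₀ (by positivity), one_smul] at h2
    show a - S.scal (-l) ∈ S.Pos
    unfold scal
    rwa [show a - (-l) • (1:R) = l • (1:R) + a by module]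
  · have hmem : l • (1:R) - a ∈ S.carrier := by
      rw [sub_eq_add_neg]
      exact S.add_mem (S.smul_mem l S.one_mem) (S.neg_mem ha)
    have hsq := S.SA3 hmem
    have hsum := S.pos_add hsq h'
    have heq : (l • (1:R) - a) * (l • (1:R) - a) + ((l * l) • (1:R) - a * a)
        = (2 * l) • (l • (1:R) - a) := by
      simp only [sub_mul, mul_sub, smul_mul_assoc, mul_smul_comm, one_mul, mul_one,
        smul_smul, smul_sub]
      module
    rw [heq] at hsum
    have h2 := S.pos_smul (show (0:ℝ) ≤ (2 * l)⁻¹ by positivity) hsum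
    rw [smul_smul, inv_mul_cancel₀ (by positivity), one_smul] at h2
    exact h2

end SynapticAlgebra

/-- A limiting helper over the reals. -/
lemma real_mul_helper {x y z : ℝ} (hx : 0 ≤ x) (hy : 0 ≤ y)
    (h : ∀ α β : ℝ, x < α → y < β → z ≤ α * β) : z ≤ x * y := by
  refine le_of_forall_pos_le_add fun ε hε => ?_
  set δ := min 1 (ε / (x + y + 1)) with hδdef
  have hδ : 0 < δ := lt_min one_pos (div_pos hε (by linarith))
  have h1 := h (x + δ) (y + δ) (by linarith) (by linarith)
  have hδ1 : δ ≤ 1 := min_le_left _ _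
  have hδ2 : δ * (x + y + 1) ≤ ε := by
    have := min_le_right 1 (ε / (x + y + 1))
    rw [hδdef]
    calc min 1 (ε / (x+y+1)) * (x+y+1) ≤ (ε / (x+y+1)) * (x+y+1) := by
          apply mul_le_mul_of_nonneg_right this (by linarith)
      _ = ε := by field_simp
  nlinarith

/-- Lemma 1.3: (i) `−λ ≤ a ≤ λ ↔ a² ≤ λ²`; (ii) `‖a²‖ = ‖a‖²`;
(iii) if `0 ≤ a, b` then `‖a − b‖ ≤ max ‖a‖ ‖b‖`; (iv) `‖a∘b‖ ≤ ‖a‖ ‖b‖`;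
(v) if `aCb` then `‖ab‖ ≤ ‖a‖ ‖b‖`. -/
theorem stmt0 (S : SynapticAlgebra R) {a b : R} (ha : a ∈ S.carrier) (hb : b ∈ S.carrier)
    {l : ℝ} (hl : 0 < l) :
    ((S.le (S.scal (-l)) a ∧ S.le a (S.scal l)) ↔ S.le (a * a) (S.scal (l * l))) ∧
    (S.nrm (a * a) = S.nrm a ^ 2) ∧
    (a ∈ S.Pos → b ∈ S.Pos → S.nrm (a - b) ≤ max (S.nrm a) (S.nrm b)) ∧
    (S.nrm ((1/2 : ℝ) • (a * b + b * a)) ≤ S.nrm a * S.nrm b) ∧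
    (a * b = b * a → S.nrm (a * b) ≤ S.nrm a * S.nrm b) := by
  have haa : a * a ∈ S.carrier := S.pos_subset (S.SA3 ha)
  have hna : 0 ≤ S.nrm a := S.nrm_nonneg' ha
  have hnb : 0 ≤ S.nrm b := S.nrm_nonneg' hb
  -- part (iv) first, so we can reuse it for (v)
  have hiv : S.nrm ((1/2 : ℝ) • (a * b + b * a)) ≤ S.nrm a * S.nrm b := by
    refine real_mul_helper hna hnb fun α β hα hβ => ?_
    have hα0 : 0 < α := lt_of_le_of_lt hna hα
    have hβ0 : 0 < β := lt_of_le_of_lt hnb hβ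
    set u := Real.sqrt α with hudef
    set v := Real.sqrt β with hvdef
    have hu : 0 < u := Real.sqrt_pos.2 hα0
    have hv : 0 < v := Real.sqrt_pos.2 hβ0
    have huu : u * u = α := Real.mul_self_sqrt hα0.le
    have hvv : v * v = β := Real.mul_self_sqrt hβ0.le
    set s := v / u with hsdef
    have hs0 : 0 < s := div_pos hv hu
    have hsα : s * α = u * v := by
      rw [hsdef, ← huu]; field_simp
    have hsβ : s⁻¹ * β = u * v := by
      rw [hsdef, ← hvv]; field_simp
    obtain ⟨-, ha1, ha2⟩ := S.mem_of_nrm_lt ha hα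
    obtain ⟨-, hb1, hb2⟩ := S.mem_of_nrm_lt hb hβ
    -- bounds on c := s•a and d := s⁻¹•b
    have hc2 : (u * v) • (1:R) - s • a ∈ S.Pos := by
      have h := S.pos_smul hs0.le ha2
      unfold SynapticAlgebra.le SynapticAlgebra.scal at h
      rwa [show s • (α • (1:R) - a) = (s * α) • (1:R) - s • a by
        rw [smul_sub, smul_smul], hsα] at h
    have hc1 : s • a + (u * v) • (1:R) ∈ S.Pos := by
      have h := S.pos_smul hs0.le ha1
      unfold SynapticAlgebra.le SynapticAlgebra.scal at h
      rwa [show s • (a - (-α) • (1:R)) = s • a + (s * α) • (1:R) by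
        rw [smul_sub, smul_smul]; module, hsα] at h
    have hd2 : (u * v) • (1:R) - s⁻¹ • b ∈ S.Pos := by
      have h := S.pos_smul (inv_nonneg.2 hs0.le) hb2
      unfold SynapticAlgebra.le SynapticAlgebra.scal at h
      rwa [show s⁻¹ • (β • (1:R) - b) = (s⁻¹ * β) • (1:R) - s⁻¹ • b by
        rw [smul_sub, smul_smul], hsβ] at h
    have hd1 : s⁻¹ • b + (u * v) • (1:R) ∈ S.Pos := by
      have h := S.pos_smul (inv_nonneg.2 hs0.le) hb1
      unfold SynapticAlgebra.le SynapticAlgebra.scal at h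
      rwa [show s⁻¹ • (b - (-β) • (1:R)) = s⁻¹ • b + (s⁻¹ * β) • (1:R) by
        rw [smul_sub, smul_smul]; module, hsβ] at h
    have huv0 : 0 < 2 * (u * v) := by positivity
    -- bounds on the sum and difference
    have hsum1 : S.le (S.scal (-(2 * (u * v)))) (s • a + s⁻¹ • b) := by
      show _ - _ ∈ S.Pos
      have h := S.pos_add hc1 hd1
      unfold SynapticAlgebra.scal
      rwa [show s • a + (u*v) • (1:R) + (s⁻¹ • b + (u*v) • (1:R))
        = s • a + s⁻¹ • b - (-(2*(u*v))) • (1:R) by module] at h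
    have hsum2 : S.le (s • a + s⁻¹ • b) (S.scal (2 * (u * v))) := by
      show _ - _ ∈ S.Pos
      have h := S.pos_add hc2 hd2
      unfold SynapticAlgebra.scal
      rwa [show (u*v) • (1:R) - s • a + ((u*v) • (1:R) - s⁻¹ • b)
        = (2*(u*v)) • (1:R) - (s • a + s⁻¹ • b) by module] at h
    have hdiff1 : S.le (S.scal (-(2 * (u * v)))) (s • a - s⁻¹ • b) := by
      show _ - _ ∈ S.Pos
      have h := S.pos_add hc1 hd2
      unfold SynapticAlgebra.scal
      rwa [show s • a + (u*v) • (1:R) + ((u*v) • (1:R) - s⁻¹ • b)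
        = s • a - s⁻¹ • b - (-(2*(u*v))) • (1:R) by module] at h
    have hdiff2 : S.le (s • a - s⁻¹ • b) (S.scal (2 * (u * v))) := by
      show _ - _ ∈ S.Pos
      have h := S.pos_add hc2 hd1
      unfold SynapticAlgebra.scal
      rwa [show (u*v) • (1:R) - s • a + (s⁻¹ • b + (u*v) • (1:R))
        = (2*(u*v)) • (1:R) - (s • a - s⁻¹ • b) by module] at h
    have hsq1 := S.sq_le_of_le huv0 hsum1 hsum2
    have hsq2 := S.sq_le_of_le huv0 hdiff1 hdiff2
    have hmemc : s • a ∈ S.carrier := S.smul_mem _ ha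
    have hmemd : s⁻¹ • b ∈ S.carrier := S.smul_mem _ hb
    have hp1 := S.SA3 (S.add_mem hmemc hmemd)
    have hp2 : (s • a - s⁻¹ • b) * (s • a - s⁻¹ • b) ∈ S.Pos := by
      have := S.SA3 (S.add_mem hmemc (S.neg_mem hmemd))
      rwa [← sub_eq_add_neg] at this
    -- key algebraic identity
    have hcd : (s • a) * (s⁻¹ • b) = a * b := by
      rw [smul_mul_assoc, mul_smul_comm, smul_smul, mul_inv_cancel₀ hs0.ne', one_smul]
    have hdc : (s⁻¹ • b) * (s • a) = b * a := by
      rw [smul_mul_assoc, mul_smul_comm, smul_smul, inv_mul_cancel₀ hs0.ne', one_smul]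
    have hkey : (s • a + s⁻¹ • b) * (s • a + s⁻¹ • b)
        - (s • a - s⁻¹ • b) * (s • a - s⁻¹ • b) = (2:ℝ) • (a * b + b * a) := by
      have hexp : ∀ c d : R, (c + d) * (c + d) - (c - d) * (c - d)
          = c * d + d * c + (c * d + d * c) := by intros; noncomm_ring
      rw [hexp, hcd, hdc, two_smul]
    have h4 : (2 * (u * v)) * (2 * (u * v)) = 4 * (α * β) := by
      rw [← huu, ← hvv]; ring
    have hαβ0 : (0:ℝ) < α * β := mul_pos hα0 hβ0
    have hupper : S.le ((1/2 : ℝ) • (a * b + b * a)) (S.scal (α * β)) := by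
      show _ - _ ∈ S.Pos
      have hx := S.pos_add hsq1 hp2
      unfold SynapticAlgebra.le SynapticAlgebra.scal at hx
      rw [h4] at hx
      have heq : (4 * (α * β)) • (1:R)
            - (s • a + s⁻¹ • b) * (s • a + s⁻¹ • b)
            + (s • a - s⁻¹ • b) * (s • a - s⁻¹ • b)
          = (4:ℝ) • ((α * β) • (1:R) - (1/2 : ℝ) • (a * b + b * a)) := by
        calc (4 * (α * β)) • (1:R)
              - (s • a + s⁻¹ • b) * (s • a + s⁻¹ • b)
              + (s • a - s⁻¹ • b) * (s • a - s⁻¹ • b)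
            = (4 * (α * β)) • (1:R)
              - ((s • a + s⁻¹ • b) * (s • a + s⁻¹ • b)
                - (s • a - s⁻¹ • b) * (s • a - s⁻¹ • b)) := by abel
          _ = (4 * (α * β)) • (1:R) - (2:ℝ) • (a * b + b * a) := by rw [hkey]
          _ = (4:ℝ) • ((α * β) • (1:R) - (1/2 : ℝ) • (a * b + b * a)) := by module
      rw [heq] at hx
      have h5 := S.pos_smul (show (0:ℝ) ≤ (4:ℝ)⁻¹ by norm_num) hx
      rw [smul_smul, show (4:ℝ)⁻¹ * 4 = 1 by norm_num, one_smul] at h5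
      unfold SynapticAlgebra.scal
      exact h5
    have hlower : S.le (S.scal (-(α * β))) ((1/2 : ℝ) • (a * b + b * a)) := by
      show _ - _ ∈ S.Pos
      have hx := S.pos_add hsq2 hp1
      unfold SynapticAlgebra.le SynapticAlgebra.scal at hx
      rw [h4] at hx
      have heq : (4 * (α * β)) • (1:R)
            - (s • a - s⁻¹ • b) * (s • a - s⁻¹ • b)
            + (s • a + s⁻¹ • b) * (s • a + s⁻¹ • b)
          = (4:ℝ) • ((1/2 : ℝ) • (a * b + b * a) - (-(α * β)) • (1:R)) := by
        calc (4 * (α * β)) • (1:R)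
              - (s • a - s⁻¹ • b) * (s • a - s⁻¹ • b)
              + (s • a + s⁻¹ • b) * (s • a + s⁻¹ • b)
            = (4 * (α * β)) • (1:R)
              + ((s • a + s⁻¹ • b) * (s • a + s⁻¹ • b)
                - (s • a - s⁻¹ • b) * (s • a - s⁻¹ • b)) := by abel
          _ = (4 * (α * β)) • (1:R) + (2:ℝ) • (a * b + b * a) := by rw [hkey]
          _ = (4:ℝ) • ((1/2 : ℝ) • (a * b + b * a) - (-(α * β)) • (1:R)) := by module
      rw [heq] at hx
      have h5 := S.pos_smul (show (0:ℝ) ≤ (4:ℝ)⁻¹ by norm_num) hx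
      rw [smul_smul, show (4:ℝ)⁻¹ * 4 = 1 by norm_num, one_smul] at h5
      unfold SynapticAlgebra.scal
      exact h5
    exact S.nrm_le_of_mem ⟨hαβ0, hlower, hupper⟩
  refine ⟨⟨fun h => S.sq_le_of_le hl h.1 h.2, fun h => S.le_of_sq_le ha hl h⟩, ?_, ?_, hiv, ?_⟩
  · -- (ii)
    apply le_antisymm
    · refine le_of_forall_pos_le_add fun ε hε => ?_
      set t := S.nrm a ^ 2 + ε with htdef
      have ht0 : 0 < t := by positivity
      have hst : S.nrm a < Real.sqrt t := by
        rw [show S.nrm a = Real.sqrt (S.nrm a ^ 2) from (Real.sqrt_sq hna).symm]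
        exact Real.sqrt_lt_sqrt (by positivity) (by rw [htdef]; linarith)
      obtain ⟨-, hm1, hm2⟩ := S.mem_of_nrm_lt ha hst
      have hsq := S.sq_le_of_le (lt_of_le_of_lt hna hst) hm1 hm2
      rw [Real.mul_self_sqrt ht0.le] at hsq
      refine S.nrm_le_of_mem ⟨ht0, ?_, hsq⟩
      show a * a - S.scal (-t) ∈ S.Pos
      have h := S.pos_add (S.SA3 ha) (S.smul_one_pos' ht0.le)
      unfold SynapticAlgebra.scal
      rwa [show a * a + t • (1:R) = a * a - (-t) • (1:R) by module] at h
    · refine le_csInf (S.nset_nonempty haa) fun t ht => ?_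
      have ht0 : 0 < t := ht.1
      have hsqle : S.le (a * a) (S.scal (Real.sqrt t * Real.sqrt t)) := by
        rw [Real.mul_self_sqrt ht0.le]; exact ht.2.2
      obtain ⟨h1, h2⟩ := S.le_of_sq_le ha (Real.sqrt_pos.2 ht0) hsqle
      have hle := S.nrm_le_of_mem ⟨Real.sqrt_pos.2 ht0, h1, h2⟩
      calc S.nrm a ^ 2 ≤ Real.sqrt t ^ 2 := by
            apply pow_le_pow_left₀ hna hle
        _ = t := Real.sq_sqrt ht0.le
  · -- (iii)
    intro hpa hpb
    refine le_of_forall_pos_le_add fun ε hε => ?_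
    set t := max (S.nrm a) (S.nrm b) + ε with htdef
    have hta : S.nrm a < t := lt_of_le_of_lt (le_max_left _ _) (by rw [htdef]; linarith)
    have htb : S.nrm b < t := lt_of_le_of_lt (le_max_right _ _) (by rw [htdef]; linarith)
    obtain ⟨ht0, hma1, hma2⟩ := S.mem_of_nrm_lt ha hta
    obtain ⟨-, hmb1, hmb2⟩ := S.mem_of_nrm_lt hb htb
    refine S.nrm_le_of_mem ⟨ht0, ?_, ?_⟩
    · show a - b - S.scal (-t) ∈ S.Pos
      have h := S.pos_add hpa hmb2
      unfold SynapticAlgebra.le SynapticAlgebra.scal at h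
      unfold SynapticAlgebra.scal
      rwa [show a + (t • (1:R) - b) = a - b - (-t) • (1:R) by module] at h
    · show S.scal t - (a - b) ∈ S.Pos
      have h := S.pos_add hpb hma2
      unfold SynapticAlgebra.le SynapticAlgebra.scal at h
      unfold SynapticAlgebra.scal
      rwa [show b + (t • (1:R) - a) = t • (1:R) - (a - b) by module] at h
  · -- (v)
    intro hab
    have heq : (1/2 : ℝ) • (a * b + b * a) = a * b := by
      rw [← hab, ← two_smul ℝ (a * b), smul_smul]; norm_num
    rw [← heq]
    exact hiv
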